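/- If p is a prime and x, y, z are positive integers solving 4/p = 1/x + 1/y + 1/z such that 4/p ≤ 1/(x-1) + 1/y (with x ≥ 2), then x = ⌊py/(4y-p)⌋ + 1. -/
import Mathlib


theorem near_boundary_typeIb (p x y z : ℕ) (hp : p.Prime)
    (hx : 2 ≤ x) (hy : 0 < y) (hz : 0 < z)
    (heq : (4 : ℚ) / p = 1 / x + 1 / y + 1 / z)
    (hle : (4 : ℚ) / p ≤ 1 / ((x : ℚ) - 1) + 1 / y) :
    (x : ℤ) = ⌊(p * y : ℚ) / (4 * y - p)⌋ + 1 := by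
  have hp0 : (0:ℚ) < p := by exact_mod_cast hp.pos
  have hx0 : (2:ℚ) ≤ x := by exact_mod_cast hx
  have hy0 : (0:ℚ) < y := by exact_mod_cast hy
  have hz0 : (0:ℚ) < z := by exact_mod_cast hz
  have hx1 : (0:ℚ) < (x:ℚ) - 1 := by linarith
  have hxx : (0:ℚ) < x := by linarith
  have hd : (0:ℚ) < 4*(y:ℚ) - p := by
    have h1 : (1:ℚ)/y < 4/p := by
      rw [heq]
      have h2 : 0 < 1/(x:ℚ) := by positivity
      have h3 : 0 < 1/(z:ℚ) := by positivity
      linarith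
    rw [div_lt_div_iff₀ hy0 hp0] at h1
    linarith
  have heq' : 4*(x:ℚ)*y*z = p*(y*z + x*z + x*y) := by
    field_simp at heq
    linarith [heq]
  have key1 : ((p:ℚ)*y)/(4*y-p) < x := by
    rw [div_lt_iff₀ hd]
    nlinarith [heq', mul_pos hp0 (mul_pos hxx hy0), hz0]
  have key2 : ((x:ℚ)-1) ≤ (p*y)/(4*y-p) := by
    rw [le_div_iff₀ hd]
    have hle' : 4*((x:ℚ)-1)*y ≤ p*(y + (x-1)) := by
      rw [div_add_div _ _ (ne_of_gt hx1) (ne_of_gt hy0),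
        div_le_div_iff₀ hp0 (mul_pos hx1 hy0)] at hle
      linarith
    nlinarith
  have hfl : ⌊((p:ℚ)*y)/(4*y-p)⌋ = (x:ℤ) - 1 := by
    rw [Int.floor_eq_iff]
    constructor
    · push_cast; linarith
    · push_cast; linarith
  rw [hfl]; ring
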